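/- Let ε > 0 and let φ : [-1,1] → ℝ be a C² solution of ε² φ'' = Σ_{k=1}^{N1} A_k e^{a_k φ} - Σ_{l=1}^{N2} B_l e^{-b_l φ} on (-1,1), where A_k, B_l > 0 and a_k, b_l > 0. If φ'(y₁) = φ'(y₂) = 0 for some -1 ≤ y₁ < y₂ ≤ 1, then φ' ≡ 0 on [y₁, y₂]. -/

import Mathlib

open Set

/-- If φ' vanishes at two points y₁ < y₂, then φ' ≡ 0 on [y₁, y₂]. -/
theorem stmt_10 (N1 N2 : ℕ)
    (a A : Fin N1 → ℝ) (b B : Fin N2 → ℝ)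
    (ha : ∀ k, 0 < a k) (hA : ∀ k, 0 < A k)
    (hb : ∀ l, 0 < b l) (hB : ∀ l, 0 < B l)
    (ε : ℝ) (hε : 0 < ε)
    (φ φ' φ'' : ℝ → ℝ)
    (hd1 : ∀ x ∈ Set.Icc (-1 : ℝ) 1, HasDerivWithinAt φ (φ' x) (Set.Icc (-1 : ℝ) 1) x)
    (hd2 : ∀ x ∈ Set.Icc (-1 : ℝ) 1, HasDerivWithinAt φ' (φ'' x) (Set.Icc (-1 : ℝ) 1) x)
    (hc2 : ContinuousOn φ'' (Set.Icc (-1 : ℝ) 1))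
    (hode : ∀ x ∈ Set.Ioo (-1 : ℝ) 1,
      ε ^ 2 * φ'' x =
        ∑ k, A k * Real.exp (a k * φ x) - ∑ l, B l * Real.exp (-(b l) * φ x))
    (y₁ y₂ : ℝ) (hy : -1 ≤ y₁) (hy' : y₁ < y₂) (hy'' : y₂ ≤ 1)
    (hz₁ : φ' y₁ = 0) (hz₂ : φ' y₂ = 0) :
    ∀ x ∈ Set.Icc y₁ y₂, φ' x = 0 := by
  set F : ℝ → ℝ := fun t => (∑ k, A k / a k * Real.exp (a k * t)) + ∑ l, B l / b l * Real.exp (-(b l) * t) with hFdef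
  set G : ℝ → ℝ := fun t => (∑ k, A k * Real.exp (a k * t)) - ∑ l, B l * Real.exp (-(b l) * t) with hGdef
  set G2 : ℝ → ℝ := fun t => (∑ k, a k * A k * Real.exp (a k * t)) + ∑ l, b l * B l * Real.exp (-(b l) * t) with hG2def
  have hF' : ∀ t, HasDerivAt F (G t) t := by
    intro t
    have h1 : ∀ k : Fin N1, HasDerivAt (fun t => A k / a k * Real.exp (a k * t))
        (A k * Real.exp (a k * t)) t := by
      intro k
      have := (((hasDerivAt_id t).const_mul (a k)).exp).const_mul (A k / a k)
      refine this.congr_deriv ?_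
      simp only [id_eq]
      field_simp [(ha k).ne']
    have h2 : ∀ l : Fin N2, HasDerivAt (fun t => B l / b l * Real.exp (-(b l) * t))
        (-(B l * Real.exp (-(b l) * t))) t := by
      intro l
      have := (((hasDerivAt_id t).const_mul (-(b l))).exp).const_mul (B l / b l)
      refine this.congr_deriv ?_
      simp only [id_eq]
      field_simp [(hb l).ne']
    exact (HasDerivAt.fun_sum (u := Finset.univ) (fun k _ => h1 k)).add (HasDerivAt.fun_sum (u := Finset.univ) (fun l _ => h2 l)) |>.congr_deriv
      (by simp [hGdef, sub_eq_add_neg])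
  have hG' : ∀ t, HasDerivAt G (G2 t) t := by
    intro t
    have h1 : ∀ k : Fin N1, HasDerivAt (fun t => A k * Real.exp (a k * t))
        (a k * A k * Real.exp (a k * t)) t := by
      intro k
      have := (((hasDerivAt_id t).const_mul (a k)).exp).const_mul (A k)
      refine this.congr_deriv ?_
      simp only [id_eq]
      ring
    have h2 : ∀ l : Fin N2, HasDerivAt (fun t => B l * Real.exp (-(b l) * t))
        (-(b l * B l * Real.exp (-(b l) * t))) t := by
      intro l
      have := (((hasDerivAt_id t).const_mul (-(b l))).exp).const_mul (B l)
      refine this.congr_deriv ?_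
      simp only [id_eq]
      ring
    exact (HasDerivAt.fun_sum (u := Finset.univ) (fun k _ => h1 k)).sub (HasDerivAt.fun_sum (u := Finset.univ) (fun l _ => h2 l)) |>.congr_deriv
      (by simp [hG2def, sub_neg_eq_add])
  -- continuity facts
  have hI : Set.Icc y₁ y₂ ⊆ Set.Icc (-1 : ℝ) 1 := Set.Icc_subset_Icc hy hy''
  have hφc : ContinuousOn φ (Set.Icc (-1 : ℝ) 1) := fun x hx => (hd1 x hx).continuousWithinAt
  have hφ'c : ContinuousOn φ' (Set.Icc (-1 : ℝ) 1) := fun x hx => (hd2 x hx).continuousWithinAt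
  -- the ODE extends to the closed interval
  have hGc : Continuous G := by
    simp only [hGdef]
    fun_prop
  have hode' : ∀ x ∈ Set.Icc (-1 : ℝ) 1, ε ^ 2 * φ'' x = G (φ x) := by
    intro x hx
    have hg : ContinuousOn (fun x => ε ^ 2 * φ'' x - G (φ x)) (Set.Icc (-1 : ℝ) 1) :=
      (continuousOn_const.mul hc2).sub (hGc.comp_continuousOn hφc)
    have hnb : (nhdsWithin x (Set.Ioo (-1 : ℝ) 1)).NeBot := by
      apply mem_closure_iff_nhdsWithin_neBot.mp
      rw [closure_Ioo (by norm_num : (-1 : ℝ) ≠ 1)]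
      exact hx
    have ht1 : Filter.Tendsto (fun y => ε ^ 2 * φ'' y - G (φ y))
        (nhdsWithin x (Set.Ioo (-1 : ℝ) 1)) (nhds (ε ^ 2 * φ'' x - G (φ x))) :=
      (hg x hx).mono_left (nhdsWithin_mono x Set.Ioo_subset_Icc_self)
    have heq : (fun y => ε ^ 2 * φ'' y - G (φ y)) =ᶠ[nhdsWithin x (Set.Ioo (-1 : ℝ) 1)]
        (fun _ => (0 : ℝ)) := by
      filter_upwards [self_mem_nhdsWithin] with y hy
      have := hode y hy
      simp only [hGdef]
      linarith
    have ht2 : Filter.Tendsto (fun y => ε ^ 2 * φ'' y - G (φ y))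
        (nhdsWithin x (Set.Ioo (-1 : ℝ) 1)) (nhds 0) := by
      rw [Filter.tendsto_congr' heq]
      exact tendsto_const_nhds
    have := tendsto_nhds_unique ht1 ht2
    linarith
  -- energy is constant
  have hE : ∀ x ∈ Set.Icc (-1 : ℝ) 1,
      HasDerivWithinAt (fun x => ε ^ 2 * (φ' x) ^ 2 / 2 - F (φ x)) 0 (Set.Icc (-1 : ℝ) 1) x := by
    intro x hx
    have h1 : HasDerivWithinAt (fun x => ε ^ 2 * (φ' x) ^ 2 / 2)
        (ε ^ 2 * (2 * φ' x * φ'' x) / 2) (Set.Icc (-1 : ℝ) 1) x := by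
      have := ((hd2 x hx).fun_pow 2).const_mul (ε ^ 2) |>.div_const 2
      refine this.congr_deriv ?_
      ring
    have h2 : HasDerivWithinAt (fun x => F (φ x)) (G (φ x) * φ' x) (Set.Icc (-1 : ℝ) 1) x :=
      (hF' (φ x)).comp_hasDerivWithinAt x (hd1 x hx)
    have := h1.fun_sub h2
    refine this.congr_deriv ?_
    have h3 := hode' x hx
    rw [← h3]
    ring
  have hconst : ∀ x ∈ Set.Icc y₁ y₂,
      ε ^ 2 * (φ' x) ^ 2 / 2 - F (φ x) = ε ^ 2 * (φ' y₁) ^ 2 / 2 - F (φ y₁) := by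
    apply constant_of_has_deriv_right_zero
    · have hEc : ContinuousOn (fun x => ε ^ 2 * (φ' x) ^ 2 / 2 - F (φ x)) (Set.Icc (-1 : ℝ) 1) :=
        fun x hx => (hE x hx).continuousWithinAt
      exact hEc.mono hI
    · intro x hx
      have hx1 : x ∈ Set.Icc (-1 : ℝ) 1 := hI ⟨hx.1, hx.2.le⟩
      refine (hE x hx1).mono_of_mem_nhdsWithin ?_
      refine Filter.mem_of_superset (Icc_mem_nhdsGE_of_mem ⟨le_refl x, lt_of_lt_of_le hx.2 hy''⟩) ?_
      exact Set.Icc_subset_Icc hx1.1 le_rfl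
  -- energy identity
  have hen : ∀ x ∈ Set.Icc y₁ y₂, ε ^ 2 * (φ' x) ^ 2 / 2 = F (φ x) - F (φ y₁) := by
    intro x hx
    have := hconst x hx
    rw [hz₁] at this
    linarith
  have hge : ∀ x ∈ Set.Icc y₁ y₂, F (φ y₁) ≤ F (φ x) := by
    intro x hx
    have h1 := hen x hx
    have h2 : (0:ℝ) ≤ ε ^ 2 * (φ' x) ^ 2 / 2 := by positivity
    rw [h1] at h2
    exact sub_nonneg.mp h2
  -- main goal reduces to F (φ x) = F (φ y₁)
  have hkey : ∀ x ∈ Set.Icc y₁ y₂, F (φ x) = F (φ y₁) → φ' x = 0 := by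
    intro x hx hFx
    have := hen x hx
    rw [hFx, sub_self] at this
    have h2 : (φ' x) ^ 2 = 0 := by
      have hε2 : (0:ℝ) < ε ^ 2 := pow_pos hε 2
      nlinarith
    exact pow_eq_zero_iff (by norm_num) |>.mp h2
  by_cases hN : N1 = 0 ∧ N2 = 0
  · obtain ⟨h1, h2⟩ := hN
    subst h1; subst h2
    intro x hx
    exact hkey x hx (by simp [hFdef])
  · -- strict convexity of F
    have hG2pos : ∀ t, 0 < G2 t := by
      intro t
      have hs1 : 0 ≤ ∑ k, a k * A k * Real.exp (a k * t) :=
        Finset.sum_nonneg fun k _ =>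
          (mul_nonneg (mul_nonneg (ha k).le (hA k).le) (Real.exp_pos _).le)
      have hs2 : 0 ≤ ∑ l, b l * B l * Real.exp (-(b l) * t) :=
        Finset.sum_nonneg fun l _ =>
          (mul_nonneg (mul_nonneg (hb l).le (hB l).le) (Real.exp_pos _).le)
      rcases not_and_or.mp hN with h | h
      · have hne : Nonempty (Fin N1) := Fin.pos_iff_nonempty.mp (Nat.pos_of_ne_zero h)
        have : 0 < ∑ k, a k * A k * Real.exp (a k * t) :=
          Finset.sum_pos
            (fun k _ => mul_pos (mul_pos (ha k) (hA k)) (Real.exp_pos _))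
            Finset.univ_nonempty
        simp only [hG2def]
        linarith
      · have hne : Nonempty (Fin N2) := Fin.pos_iff_nonempty.mp (Nat.pos_of_ne_zero h)
        have : 0 < ∑ l, b l * B l * Real.exp (-(b l) * t) :=
          Finset.sum_pos
            (fun l _ => mul_pos (mul_pos (hb l) (hB l)) (Real.exp_pos _))
            Finset.univ_nonempty
        simp only [hG2def]
        linarith
    have hsc : StrictConvexOn ℝ Set.univ F := by
      apply strictConvexOn_of_deriv2_pos convex_univ
        (Continuous.continuousOn (by fun_prop : Continuous F))
      intro t _
      have hdF : deriv F = G := funext fun s => (hF' s).deriv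
      have : deriv^[2] F t = deriv (deriv F) t := rfl
      rw [this, hdF, (hG' t).deriv]
      exact hG2pos t
    -- no two distinct values of φ on [y₁,y₂] can both achieve the energy level
    have hne : ∀ p ∈ Set.Icc y₁ y₂, F (φ p) = F (φ y₁) → φ p = φ y₁ := by
      intro p hp hFp
      by_contra hpq
      set u := φ p
      set v := φ y₁
      have hmid : (u + v) / 2 ∈ openSegment ℝ u v := by
        rcases lt_or_gt_of_ne hpq with h | h
        · rw [openSegment_eq_Ioo h]
          exact ⟨by linarith, by linarith⟩
        · rw [openSegment_symm, openSegment_eq_Ioo h]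
          exact ⟨by linarith, by linarith⟩
      have hlt : F ((u + v) / 2) < F v := by
        have := hsc.lt_on_openSegment (Set.mem_univ u) (Set.mem_univ v) hpq hmid
        rwa [hFp, max_self] at this
      -- IVT: (u+v)/2 is attained by φ on [y₁,y₂]
      have hsub : Set.uIcc p y₁ ⊆ Set.Icc y₁ y₂ :=
        Set.ordConnected_Icc.uIcc_subset hp ⟨le_rfl, hy'.le⟩
      have hivt : Set.uIcc u v ⊆ φ '' Set.uIcc p y₁ :=
        intermediate_value_uIcc ((hφc.mono hI).mono hsub)
      have hmem : (u + v) / 2 ∈ Set.uIcc u v := by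
        rcases lt_or_gt_of_ne hpq with h | h
        · rw [Set.uIcc_of_le h.le]; constructor <;> linarith
        · rw [Set.uIcc_of_ge h.le]; constructor <;> linarith
      obtain ⟨x, hxmem, hxval⟩ := hivt hmem
      have := hge x (hsub hxmem)
      rw [hxval] at this
      linarith
    -- φ y₂ = φ y₁
    have hy2 : F (φ y₂) = F (φ y₁) := by
      have := hen y₂ ⟨hy'.le, le_refl y₂⟩
      rw [hz₂] at this
      simp at this
      linarith
    have hy2' : φ y₂ = φ y₁ := hne y₂ ⟨hy'.le, le_refl y₂⟩ hy2
    -- extreme values of φ on [y₁,y₂] equal φ y₁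
    have hcompact : IsCompact (Set.Icc y₁ y₂) := isCompact_Icc
    have hnonempty : (Set.Icc y₁ y₂).Nonempty := Set.nonempty_Icc.mpr hy'.le
    have hφcI : ContinuousOn φ (Set.Icc y₁ y₂) := hφc.mono hI
    have hext : ∀ z ∈ Set.Icc y₁ y₂, (IsMaxOn φ (Set.Icc y₁ y₂) z ∨ IsMinOn φ (Set.Icc y₁ y₂) z) →
        φ z = φ y₁ := by
      intro z hz hmax
      by_contra hzc
      -- z is an interior extremum (z ≠ y₁, z ≠ y₂ since φ equals φ y₁ there)
      have hz1 : z ≠ y₁ := fun h => hzc (by rw [h])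
      have hz2 : z ≠ y₂ := fun h => hzc (by rw [h, hy2'])
      have hzo : z ∈ Set.Ioo y₁ y₂ := ⟨lt_of_le_of_ne hz.1 (Ne.symm hz1), lt_of_le_of_ne hz.2 hz2⟩
      have hzo' : z ∈ Set.Ioo (-1 : ℝ) 1 := ⟨lt_of_le_of_lt hy hzo.1, lt_of_lt_of_le hzo.2 hy''⟩
      have hnhds : Set.Icc y₁ y₂ ∈ nhds z := Icc_mem_nhds hzo.1 hzo.2
      have hda : HasDerivAt φ (φ' z) z :=
        (hd1 z ⟨hzo'.1.le, hzo'.2.le⟩).hasDerivAt (Icc_mem_nhds hzo'.1 hzo'.2)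
      have hz0 : φ' z = 0 := by
        rcases hmax with hmax | hmin
        · exact (hmax.isLocalMax hnhds).hasDerivAt_eq_zero hda
        · exact (hmin.isLocalMin hnhds).hasDerivAt_eq_zero hda
      have hFz : F (φ z) = F (φ y₁) := by
        have := hen z hz
        rw [hz0] at this
        simp at this
        linarith
      exact hzc (hne z hz hFz)
    obtain ⟨zM, hzM, hzMmax⟩ := hcompact.exists_isMaxOn hnonempty hφcI
    obtain ⟨zm, hzm, hzmmin⟩ := hcompact.exists_isMinOn hnonempty hφcI
    have hM := hext zM hzM (Or.inl hzMmax)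
    have hm := hext zm hzm (Or.inr hzmmin)
    intro x hx
    apply hkey x hx
    have h1 : φ x ≤ φ y₁ := hM ▸ hzMmax hx
    have h2 : φ y₁ ≤ φ x := hm ▸ hzmmin hx
    rw [le_antisymm h1 h2]
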